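/- For a real number $q$ with $q > 0$ and $q \ne 1$, and for all positive integers $n$, $p$, $r$, $\sum_{\ell=1}^{n} q^{\ell-1}\, [\ell]_q^{(p)}\, H_{\ell}^{(r)}(q) = \Bigl(\sum_{m=1}^{p} s_{uq}(p,m) A_q(m,r,n)\Bigr) H_n^{(r)}(q) - \sum_{m=1}^{p} s_{uq}(p,m) B_q(m,r,n)$, where $[\ell]_q^{(p)} = [\ell]_q [\ell+1]_q \cdots [\ell+p-1]_q$, $s_{uq}(p,m)$ are the $q$-unsigned Stirling numbers of the first kind, $A_q(m,r,n) = \sum_{\ell=0}^{m} q^{\binom{\ell}{2}+\ell-1} S_q(m,\ell)\, [\ell]_q!\, \binom{n+r-1}{r-1}_q^{-1} \binom{r+\ell-1}{\ell}_q \binom{r+n}{r+\ell}_q$, and $B_q(m,r,n) = \sum_{\ell=0}^{m} \frac{q^{\binom{\ell}{2}+r+2\ell-2}}{[r+\ell]_q} S_q(m,\ell)\, [\ell]_q!\, \binom{r+\ell-1}{\ell}_q \binom{r+n-1}{r+\ell}_q$. -/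

import Mathlib

/-- The `q`-integer `[n]_q = (1 - q^n)/(1 - q)`. -/
noncomputable def qint (q : ℝ) (n : ℕ) : ℝ := (1 - q ^ n) / (1 - q)

/-- The `q`-factorial `[n]_q! = [n]_q [n-1]_q ⋯ [1]_q`, with `[0]_q! = 1`. -/
noncomputable def qfact (q : ℝ) : ℕ → ℝ
  | 0 => 1
  | n + 1 => qint q (n + 1) * qfact q n

/-- The `q`-binomial coefficient `C(n,k)_q = [n]_q!/([k]_q! [n-k]_q!)`, equal to `0` for `k > n`. -/
noncomputable def qbinom (q : ℝ) (n k : ℕ) : ℝ :=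
  if k ≤ n then qfact q n / (qfact q k * qfact q (n - k)) else 0

/-- The `q`-hyperharmonic numbers: `H_n^{(0)}(q) = 1/(q [n]_q)` and
`H_n^{(r)}(q) = ∑_{j=1}^n q^j H_j^{(r-1)}(q)` for `r ≥ 1` (so `H_0^{(r)}(q) = 0`). -/
noncomputable def qhyp (q : ℝ) : ℕ → ℕ → ℝ
  | 0, n => 1 / (q * qint q n)
  | r + 1, n => ∑ j ∈ Finset.Icc 1 n, q ^ j * qhyp q r j

/-- The `q`-Stirling numbers of the second kind, defined by the recurrence
`S_q(n+1, m) = S_q(n, m-1) + [m]_q S_q(n, m)` with `S_q(n,0) = S_q(0,n) = δ_{n,0}`. -/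
noncomputable def qS2 (q : ℝ) : ℕ → ℕ → ℝ
  | 0, 0 => 1
  | 0, _ + 1 => 0
  | _ + 1, 0 => 0
  | n + 1, m + 1 => qS2 q n m + qint q (m + 1) * qS2 q n (m + 1)

/-- `A_q(p,r,n) = ∑_{ℓ=0}^p q^{C(ℓ,2)+ℓ-1} S_q(p,ℓ) [ℓ]_q! C(n+r-1, r-1)_q⁻¹ C(r+ℓ-1, ℓ)_q C(r+n, r+ℓ)_q`. -/
noncomputable def Aq (q : ℝ) (p r n : ℕ) : ℝ :=
  ∑ ℓ ∈ Finset.range (p + 1),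
    q ^ ((ℓ.choose 2 : ℤ) + (ℓ : ℤ) - 1) * qS2 q p ℓ * qfact q ℓ *
      (qbinom q (n + r - 1) (r - 1))⁻¹ * qbinom q (r + ℓ - 1) ℓ * qbinom q (r + n) (r + ℓ)

/-- `B_q(p,r,n) = ∑_{ℓ=0}^p (q^{C(ℓ,2)+r+2ℓ-2}/[r+ℓ]_q) S_q(p,ℓ) [ℓ]_q! C(r+ℓ-1, ℓ)_q C(r+n-1, r+ℓ)_q`. -/
noncomputable def Bq (q : ℝ) (p r n : ℕ) : ℝ :=
  ∑ ℓ ∈ Finset.range (p + 1),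
    q ^ ((ℓ.choose 2 : ℤ) + (r : ℤ) + 2 * (ℓ : ℤ) - 2) / qint q (r + ℓ) * qS2 q p ℓ * qfact q ℓ *
      qbinom q (r + ℓ - 1) ℓ * qbinom q (r + n - 1) (r + ℓ)

/-- The `q`-unsigned Stirling numbers of the first kind, defined by
`s_{uq}(n+1, k) = [n]_q s_{uq}(n, k) + q^n s_{uq}(n, k-1)` with
`s_{uq}(0,0) = 1` and `s_{uq}(0,k) = 0` for `k ≥ 1`. -/
noncomputable def qS1 (q : ℝ) : ℕ → ℕ → ℝ
  | 0, 0 => 1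
  | 0, _ + 1 => 0
  | n + 1, 0 => qint q n * qS1 q n 0
  | n + 1, k + 1 => qint q n * qS1 q n (k + 1) + q ^ n * qS1 q n k

/-- The rising `q`-factorial `[ℓ]_q^{(p)} = [ℓ]_q [ℓ+1]_q ⋯ [ℓ+p-1]_q`. -/
noncomputable def qrise (q : ℝ) (ℓ p : ℕ) : ℝ := ∏ i ∈ Finset.range p, qint q (ℓ + i)

variable {q : ℝ}

lemma qint_eq_geom (hq1 : q ≠ 1) (n : ℕ) : qint q n = ∑ i ∈ Finset.range n, q ^ i := by
  rw [geom_sum_eq hq1, qint]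
  have h : q - 1 ≠ 0 := sub_ne_zero.mpr hq1
  have h' : (1:ℝ) - q ≠ 0 := fun h2 => h (by linarith [sub_eq_zero.mp h2])
  field_simp
  ring

lemma qint_pos (hq : 0 < q) (hq1 : q ≠ 1) {n : ℕ} (hn : 0 < n) : 0 < qint q n := by
  rw [qint_eq_geom hq1]
  exact Finset.sum_pos (fun i _ => pow_pos hq i) (Finset.nonempty_range_iff.mpr (by omega))

lemma qint_ne_zero (hq : 0 < q) (hq1 : q ≠ 1) {n : ℕ} (hn : 0 < n) : qint q n ≠ 0 :=
  (qint_pos hq hq1 hn).ne'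

lemma qint_zero : qint q 0 = 0 := by simp [qint]

lemma qint_add (hq1 : q ≠ 1) (a b : ℕ) : qint q (a + b) = qint q a + q ^ a * qint q b := by
  have h' : (1:ℝ) - q ≠ 0 := sub_ne_zero.mpr (fun h2 => hq1 h2.symm)
  simp only [qint, pow_add]
  field_simp
  ring

lemma qfact_pos (hq : 0 < q) (hq1 : q ≠ 1) (n : ℕ) : 0 < qfact q n := by
  induction n with
  | zero => norm_num [qfact]
  | succ n ih => exact mul_pos (qint_pos hq hq1 n.succ_pos) ih

lemma qfact_ne_zero (hq : 0 < q) (hq1 : q ≠ 1) (n : ℕ) : qfact q n ≠ 0 :=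
  (qfact_pos hq hq1 n).ne'

lemma qbinom_of_le {n k : ℕ} (h : k ≤ n) :
    qbinom q n k = qfact q n / (qfact q k * qfact q (n - k)) := if_pos h

lemma qbinom_of_gt {n k : ℕ} (h : n < k) : qbinom q n k = 0 := if_neg (by omega)

lemma qbinom_zero (hq : 0 < q) (hq1 : q ≠ 1) (n : ℕ) : qbinom q n 0 = 1 := by
  rw [qbinom_of_le (Nat.zero_le n)]
  simp [qfact, qfact_ne_zero hq hq1 n]

lemma qbinom_pos (hq : 0 < q) (hq1 : q ≠ 1) {n k : ℕ} (h : k ≤ n) : 0 < qbinom q n k := by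
  rw [qbinom_of_le h]
  exact div_pos (qfact_pos hq hq1 n) (mul_pos (qfact_pos hq hq1 k) (qfact_pos hq hq1 _))

noncomputable def qfall (q : ℝ) (ℓ k : ℕ) : ℝ := ∏ i ∈ Finset.range k, qint q (ℓ - i)

noncomputable def qharm (q : ℝ) (n : ℕ) : ℝ := ∑ j ∈ Finset.Icc 1 n, q ^ (j - 1) / qint q j

lemma qfall_succ (ℓ k : ℕ) : qfall q ℓ (k + 1) = qfall q ℓ k * qint q (ℓ - k) :=
  Finset.prod_range_succ _ _

lemma qfall_of_lt {ℓ k : ℕ} (h : ℓ < k) : qfall q ℓ k = 0 := by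
  apply Finset.prod_eq_zero (Finset.mem_range.mpr h)
  simp [Nat.sub_self, qint_zero]

lemma qfall_eq_div (hq : 0 < q) (hq1 : q ≠ 1) {ℓ k : ℕ} (h : k ≤ ℓ) :
    qfall q ℓ k = qfact q ℓ / qfact q (ℓ - k) := by
  induction k with
  | zero => simp [qfall, qfact_ne_zero hq hq1 ℓ]
  | succ k ih =>
    rw [qfall_succ, ih (by omega)]
    have h1 : ℓ - k = (ℓ - (k + 1)) + 1 := by omega
    rw [h1]
    rw [show qfact q (ℓ - (k+1) + 1) = qint q (ℓ - (k+1) + 1) * qfact q (ℓ - (k+1)) from rfl]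
    have h2 : qint q (ℓ - (k+1) + 1) ≠ 0 := qint_ne_zero hq hq1 (by omega)
    have h3 : qfact q (ℓ - (k+1)) ≠ 0 := qfact_ne_zero hq hq1 _
    field_simp

lemma qharm_zero : qharm q 0 = 0 := by simp [qharm]

lemma qharm_succ (n : ℕ) : qharm q (n + 1) = qharm q n + q ^ n / qint q (n + 1) := by
  rw [qharm, qharm, Finset.sum_Icc_succ_top (by omega : 1 ≤ n + 1)]
  simp

lemma qhyp_one (hq : 0 < q) (n : ℕ) : qhyp q 1 n = qharm q n := by
  rw [show qhyp q 1 n = ∑ j ∈ Finset.Icc 1 n, q ^ j * qhyp q 0 j from rfl, qharm]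
  apply Finset.sum_congr rfl
  intro j hj
  have hj1 : 1 ≤ j := (Finset.mem_Icc.mp hj).1
  rw [show qhyp q 0 j = 1 / (q * qint q j) from rfl]
  rw [show j = (j - 1) + 1 from (by omega), pow_succ]
  have h : q * q⁻¹ = 1 := mul_inv_cancel₀ hq.ne'
  field_simp
  simp only [Nat.add_sub_cancel]

lemma qhyp_succ_top (r n : ℕ) :
    qhyp q (r + 1) (n + 1) = qhyp q (r + 1) n + q ^ (n + 1) * qhyp q r (n + 1) := by
  rw [show qhyp q (r+1) (n+1) = ∑ j ∈ Finset.Icc 1 (n+1), q ^ j * qhyp q r j from rfl,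
    Finset.sum_Icc_succ_top (by omega : 1 ≤ n + 1)]
  rfl

lemma qhyp_zero_right (r : ℕ) : qhyp q (r + 1) 0 = 0 := by
  rw [show qhyp q (r+1) 0 = ∑ j ∈ Finset.Icc 1 0, q ^ j * qhyp q r j from rfl]
  simp

lemma pascal1 (hq : 0 < q) (hq1 : q ≠ 1) (r n : ℕ) :
    qbinom q (n + r + 1) (r + 1) + q ^ (n + 1) * qbinom q (n + r + 1) r
      = qbinom q (n + r + 2) (r + 1) := by
  rw [qbinom_of_le (by omega), qbinom_of_le (by omega), qbinom_of_le (by omega)]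
  rw [show n + r + 1 - (r + 1) = n from by omega, show n + r + 1 - r = n + 1 from by omega,
    show n + r + 2 - (r + 1) = n + 1 from by omega]
  have e1 : qfact q (n + r + 2) = qint q (n + r + 2) * qfact q (n + r + 1) := rfl
  have e2 : qfact q (r + 1) = qint q (r + 1) * qfact q r := rfl
  have e3 : qfact q (n + 1) = qint q (n + 1) * qfact q n := rfl
  have e4 : qint q (n + r + 2) = qint q (n + 1) + q ^ (n + 1) * qint q (r + 1) := by
    have := qint_add hq1 (n + 1) (r + 1)
    rw [show n + 1 + (r + 1) = n + r + 2 from by ring] at this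
    exact this
  rw [e1, e2, e3, e4]
  have h1 := qint_ne_zero hq hq1 (show 0 < r + 1 by omega)
  have h2 := qint_ne_zero hq hq1 (show 0 < n + 1 by omega)
  have h3 := qfact_ne_zero hq hq1 r
  have h4 := qfact_ne_zero hq hq1 n
  have h5 := qfact_ne_zero hq hq1 (n + r + 1)
  field_simp

lemma pascal2 (hq : 0 < q) (hq1 : q ≠ 1) (r n : ℕ) :
    q ^ (n + 1) * qbinom q (n + r + 1) r * q ^ r / qint q (r + 1)
      = qbinom q (n + r + 2) (r + 1) * q ^ (n + r + 1) / qint q (n + r + 2) := by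
  rw [qbinom_of_le (by omega), qbinom_of_le (by omega)]
  rw [show n + r + 1 - r = n + 1 from by omega, show n + r + 2 - (r + 1) = n + 1 from by omega]
  have e1 : qfact q (n + r + 2) = qint q (n + r + 2) * qfact q (n + r + 1) := rfl
  have e2 : qfact q (r + 1) = qint q (r + 1) * qfact q r := rfl
  rw [e1, e2]
  have h1 := qint_ne_zero hq hq1 (show 0 < r + 1 by omega)
  have h2 := qint_ne_zero hq hq1 (show 0 < n + r + 2 by omega)
  have h3 := qfact_ne_zero hq hq1 r
  have h4 := qfact_ne_zero hq hq1 (n + 1)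
  have h5 := qfact_ne_zero hq hq1 (n + r + 1)
  field_simp
  ring

lemma qhyp_closed (hq : 0 < q) (hq1 : q ≠ 1) (r n : ℕ) :
    qhyp q (r + 1) n = qbinom q (n + r) r * (qharm q (n + r) - qharm q r) := by
  induction r generalizing n with
  | zero =>
    rw [qhyp_one hq, qharm_zero, qbinom_zero hq hq1]
    simp
  | succ r ih =>
    induction n with
    | zero =>
      rw [qhyp_zero_right]
      simp
    | succ n ihn =>
      rw [qhyp_succ_top, ihn, ih (n + 1)]
      have harm1 : qharm q (n + 1 + (r + 1)) = qharm q (n + (r + 1)) + q ^ (n + r + 1) / qint q (n + r + 2) := by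
        rw [show n + 1 + (r + 1) = (n + r + 1) + 1 from by ring, qharm_succ,
          show n + (r + 1) = n + r + 1 from by ring]
      have harm2 : qharm q (r + 1) = qharm q r + q ^ r / qint q (r + 1) := qharm_succ r
      have hp1 := pascal1 hq hq1 r n
      have hp2 := pascal2 hq hq1 r n
      rw [show n + (r + 1) = n + r + 1 from by ring] at *
      rw [show n + 1 + (r + 1) = n + r + 2 from by ring] at *
      rw [show n + 1 + r = n + r + 1 from by ring] at *
      rw [harm1, harm2]
      have hd1 : q ^ (n + 1) * qbinom q (n + r + 1) r * q ^ r / qint q (r + 1)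
          = q ^ (n + 1) * qbinom q (n + r + 1) r * (q ^ r / qint q (r + 1)) := by ring
      have hd2 : qbinom q (n + r + 2) (r + 1) * q ^ (n + r + 1) / qint q (n + r + 2)
          = qbinom q (n + r + 2) (r + 1) * (q ^ (n + r + 1) / qint q (n + r + 2)) := by ring
      rw [hd1, hd2] at hp2
      linear_combination (qharm q (n + r + 1) - qharm q r - q ^ r / qint q (r + 1)) * hp1 + hp2

noncomputable def aT (q : ℝ) (k s n : ℕ) : ℝ :=
  q ^ k / q * qfact q k * qbinom q (s + k) k * qbinom q (s + 1 + n) (s + 1 + k)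

noncomputable def bB (q : ℝ) (k s n : ℕ) : ℝ :=
  q ^ s * q ^ (2 * k) / (q * qint q (s + 1 + k)) * qfact q k * qbinom q (s + k) k *
    qbinom q (s + n) (s + 1 + k)

lemma identityI (hq : 0 < q) (hq1 : q ≠ 1) (k s n : ℕ) :
    aT q k s (n + 1) - aT q k s n = q ^ n * qfall q (n + 1) k * qbinom q (n + 1 + s) s := by
  have hq0 : q ≠ 0 := hq.ne'
  rcases lt_trichotomy k (n + 1) with hk | hk | hk
  · -- k ≤ n
    have hkn : k ≤ n := by omega
    rw [aT, aT, qbinom_of_le (show k ≤ s + k by omega), qbinom_of_le (show s + 1 + k ≤ s + 1 + (n+1) by omega),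
      qbinom_of_le (show s + 1 + k ≤ s + 1 + n by omega), qbinom_of_le (show s ≤ n + 1 + s by omega),
      qfall_eq_div hq hq1 (show k ≤ n + 1 by omega)]
    rw [show s + k - k = s from by omega, show s + 1 + (n+1) - (s+1+k) = n + 1 - k from by omega,
      show s + 1 + n - (s+1+k) = n - k from by omega, show n + 1 + s - s = n + 1 from by omega,
      show s + 1 + (n + 1) = (s + 1 + n) + 1 from by omega, show n + 1 + s = s + 1 + n from by omega]
    rw [show qfact q (s + 1 + n + 1) = qint q (s + 1 + n + 1) * qfact q (s + 1 + n) from rfl]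
    rw [show n + 1 - k = (n - k) + 1 from by omega]
    rw [show qfact q (n - k + 1) = qint q (n - k + 1) * qfact q (n - k) from rfl]
    have e4 : qint q (s + 1 + n + 1) = qint q (n - k + 1) + q ^ (n - k + 1) * qint q (s + 1 + k) := by
      have := qint_add hq1 (n - k + 1) (s + 1 + k)
      rw [show n - k + 1 + (s + 1 + k) = s + 1 + n + 1 from by omega] at this
      exact this
    rw [e4]
    have ep : q ^ (n - k + 1) = q ^ (n + 1) / q ^ k := by
      rw [show n - k + 1 = (n + 1) - k from by omega]
      exact pow_sub₀ q hq0 (by omega)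
    rw [ep]
    rw [show qfact q (s + 1 + k) = qint q (s + 1 + k) * qfact q (s + k) from
      (by rw [show s + 1 + k = (s + k) + 1 from by omega]; rfl)]
    have h1 := qint_ne_zero hq hq1 (show 0 < n - k + 1 by omega)
    have h2 := qint_ne_zero hq hq1 (show 0 < s + 1 + k by omega)
    have h3 := qfact_ne_zero hq hq1 s
    have h4 := qfact_ne_zero hq hq1 k
    have h5 := qfact_ne_zero hq hq1 (n - k)
    have h6 := qfact_ne_zero hq hq1 (s + k)
    have h7 := qfact_ne_zero hq hq1 (s + 1 + n)
    have h8 := qfact_ne_zero hq hq1 (n + 1)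
    field_simp
    ring
  · -- k = n + 1
    subst hk
    rw [aT, aT, qbinom_of_gt (show s + 1 + n < s + 1 + (n + 1) by omega),
      qbinom_of_le (show n + 1 ≤ s + (n + 1) by omega),
      qbinom_of_le (le_refl (s + 1 + (n + 1))),
      qbinom_of_le (show s ≤ n + 1 + s by omega),
      qfall_eq_div hq hq1 (le_refl (n + 1))]
    rw [show s + (n + 1) - (n + 1) = s from by omega,
      show s + 1 + (n + 1) - (s + 1 + (n + 1)) = 0 from by omega,
      show n + 1 + s - s = n + 1 from by omega, show n + 1 - (n + 1) = 0 from by omega,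
      show s + (n + 1) = n + 1 + s from by omega,
      show s + 1 + (n + 1) = n + 1 + s + 1 from by omega]
    rw [show qfact q 0 = 1 from rfl]
    have h2 := qfact_ne_zero hq hq1 s
    have h4 := qfact_ne_zero hq hq1 (n + 1 + s)
    have h7 := qfact_ne_zero hq hq1 (n + 1 + s + 1)
    have h8 := qfact_ne_zero hq hq1 (n + 1)
    field_simp
    ring
  · -- k > n + 1
    rw [aT, aT, qbinom_of_gt (show s + 1 + (n + 1) < s + 1 + k by omega),
      qbinom_of_gt (show s + 1 + n < s + 1 + k by omega), qfall_of_lt (show n + 1 < k by omega)]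
    ring

set_option maxHeartbeats 1600000 in
lemma identityII (hq : 0 < q) (hq1 : q ≠ 1) (k s n : ℕ) :
    aT q k s n * (q ^ (n + s) / qint q (n + s + 1)) = bB q k s (n + 1) - bB q k s n := by
  have hq0 : q ≠ 0 := hq.ne'
  rcases lt_trichotomy k n with hk | hk | hk
  · -- k < n
    rw [aT, bB, bB, qbinom_of_le (show k ≤ s + k by omega),
      qbinom_of_le (show s + 1 + k ≤ s + 1 + n by omega),
      qbinom_of_le (show s + 1 + k ≤ s + (n + 1) by omega),
      qbinom_of_le (show s + 1 + k ≤ s + n by omega)]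
    rw [show s + k - k = s from by omega, show s + 1 + n - (s + 1 + k) = n - k from by omega,
      show s + (n + 1) - (s + 1 + k) = n - k from by omega,
      show s + n - (s + 1 + k) = n - k - 1 from by omega,
      show s + (n + 1) = (s + n) + 1 from by omega,
      show s + 1 + n = (s + n) + 1 from by omega]
    rw [show qfact q (s + n + 1) = qint q (s + n + 1) * qfact q (s + n) from rfl]
    rw [show n - k = (n - k - 1) + 1 from by omega]
    rw [show qfact q (n - k - 1 + 1) = qint q (n - k - 1 + 1) * qfact q (n - k - 1) from rfl]
    have e4 : qint q (s + n + 1) = qint q (n - k - 1 + 1) + q ^ (n - k - 1 + 1) * qint q (s + 1 + k) := by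
      have := qint_add hq1 (n - k - 1 + 1) (s + 1 + k)
      rw [show n - k - 1 + 1 + (s + 1 + k) = s + n + 1 from by omega] at this
      exact this
    have epow : q ^ (n + s) = q ^ (n - k - 1 + 1) * q ^ k * q ^ s := by
      rw [← pow_add, ← pow_add]
      congr 1
      omega
    rw [show n + s + 1 = s + n + 1 from by omega, e4, epow]
    rw [show qfact q (s + 1 + k) = qint q (s + 1 + k) * qfact q (s + k) from
      (by rw [show s + 1 + k = (s + k) + 1 from by omega]; rfl)]
    have h1 := qint_ne_zero hq hq1 (show 0 < n - k - 1 + 1 by omega)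
    have h2 := qint_ne_zero hq hq1 (show 0 < s + 1 + k by omega)
    have h3 := qfact_ne_zero hq hq1 s
    have h4 := qfact_ne_zero hq hq1 k
    have h5 := qfact_ne_zero hq hq1 (n - k - 1)
    have h6 := qfact_ne_zero hq hq1 (s + k)
    have h7 := qfact_ne_zero hq hq1 (s + n)
    have hz : qint q (n - k - 1 + 1) + q ^ (n - k - 1 + 1) * qint q (s + 1 + k) ≠ 0 := by
      rw [← e4]
      exact qint_ne_zero hq hq1 (by omega)
    simp only [Nat.add_sub_cancel]
    field_simp
    ring
  · -- k = n
    subst hk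
    rw [aT, bB, bB, qbinom_of_le (show k ≤ s + k by omega),
      qbinom_of_le (le_refl (s + 1 + k)), qbinom_of_le (show s + 1 + k ≤ s + (k + 1) by omega),
      qbinom_of_gt (show s + k < s + 1 + k by omega)]
    rw [show s + k - k = s from by omega, show s + 1 + k - (s + 1 + k) = 0 from by omega,
      show s + (k + 1) - (s + 1 + k) = 0 from by omega,
      show s + (k + 1) = s + 1 + k from by omega, show k + s + 1 = s + 1 + k from by omega]
    rw [show qfact q 0 = 1 from rfl]
    have h2 := qint_ne_zero hq hq1 (show 0 < s + 1 + k by omega)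
    have h3 := qfact_ne_zero hq hq1 s
    have h4 := qfact_ne_zero hq hq1 k
    have h6 := qfact_ne_zero hq hq1 (s + k)
    have h7 := qfact_ne_zero hq hq1 (s + 1 + k)
    have hqk : (q:ℝ) ^ (k + s) * q ^ k = q ^ s * q ^ (2 * k) := by ring
    field_simp
    ring
  · -- k > n
    rw [aT, bB, bB, qbinom_of_gt (show s + 1 + n < s + 1 + k by omega),
      qbinom_of_gt (show s + (n + 1) < s + 1 + k by omega),
      qbinom_of_gt (show s + n < s + 1 + k by omega)]
    ring

lemma coreV (hq : 0 < q) (hq1 : q ≠ 1) (k s n : ℕ) :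
    ∑ ℓ ∈ Finset.Icc 1 n, q ^ (ℓ - 1) * qfall q ℓ k * qhyp q (s + 1) ℓ =
      aT q k s n * (qharm q (n + s) - qharm q s) - bB q k s n := by
  induction n with
  | zero =>
    rw [show (0:ℕ) + s = s from by omega]
    rw [bB, qbinom_of_gt (show s + 0 < s + 1 + k by omega)]
    simp
  | succ n ih =>
    rw [Finset.sum_Icc_succ_top (show 1 ≤ n + 1 by omega), ih]
    rw [show n + 1 - 1 = n from by omega]
    rw [qhyp_closed hq hq1 s (n + 1)]
    have harm1 : qharm q (n + 1 + s) = qharm q (n + s) + q ^ (n + s) / qint q (n + s + 1) := by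
      rw [show n + 1 + s = (n + s) + 1 from by omega, qharm_succ]
    rw [harm1]
    have hI := identityI hq hq1 k s n
    have hII := identityII hq hq1 k s n
    linear_combination (-(qharm q (n + s) - qharm q s + q ^ (n + s) / qint q (n + s + 1))) * hI - hII

lemma qint_mul_qfall (hq1 : q ≠ 1) (ℓ k : ℕ) :
    qint q ℓ * qfall q ℓ k = q ^ k * qfall q ℓ (k + 1) + qint q k * qfall q ℓ k := by
  rcases le_or_gt k ℓ with h | h
  · rw [qfall_succ]
    have e : qint q ℓ = qint q k + q ^ k * qint q (ℓ - k) := by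
      have := qint_add hq1 k (ℓ - k)
      rw [show k + (ℓ - k) = ℓ from by omega] at this
      exact this
    rw [e]; ring
  · rw [qfall_of_lt h, qfall_succ, qfall_of_lt h]; ring

lemma qS2_eq_zero : ∀ (m k : ℕ), m < k → qS2 q m k = 0 := by
  intro m
  induction m with
  | zero =>
    intro k hk
    match k, hk with
    | k + 1, _ => rfl
  | succ m ih =>
    intro k hk
    match k, hk with
    | k + 1, hk =>
      show qS2 q (m + 1) (k + 1) = 0
      rw [show qS2 q (m + 1) (k + 1) = qS2 q m k + qint q (k + 1) * qS2 q m (k + 1) from rfl,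
        ih k (by omega), ih (k + 1) (by omega)]
      ring

lemma qS1_eq_zero : ∀ (m k : ℕ), m < k → qS1 q m k = 0 := by
  intro m
  induction m with
  | zero =>
    intro k hk
    match k, hk with
    | k + 1, _ => rfl
  | succ m ih =>
    intro k hk
    match k, hk with
    | k + 1, hk =>
      show qS1 q (m + 1) (k + 1) = 0
      rw [show qS1 q (m + 1) (k + 1) = qint q m * qS1 q m (k + 1) + q ^ m * qS1 q m k from rfl,
        ih k (by omega), ih (k + 1) (by omega)]
      ring

lemma qS1_apply_zero (p : ℕ) (hp : 1 ≤ p) : qS1 q p 0 = 0 := by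
  induction p with
  | zero => omega
  | succ p ih =>
    rw [show qS1 q (p + 1) 0 = qint q p * qS1 q p 0 from rfl]
    rcases Nat.eq_zero_or_pos p with h | h
    · subst h
      rw [qint_zero]; ring
    · rw [ih h]; ring

lemma choose_two_succ (k : ℕ) : (k + 1).choose 2 = k.choose 2 + k := by
  rw [Nat.choose_succ_succ, Nat.choose_one_right, Nat.add_comm]

lemma qpow_expand (hq1 : q ≠ 1) (ℓ m : ℕ) :
    qint q ℓ ^ m = ∑ k ∈ Finset.range (m + 1), qS2 q m k * q ^ (k.choose 2) * qfall q ℓ k := by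
  induction m with
  | zero =>
    rw [pow_zero, Finset.sum_range_one,
      show qS2 q 0 0 = 1 from rfl, show qfall q ℓ 0 = 1 from rfl]
    norm_num
  | succ m ih =>
    rw [pow_succ, ih, Finset.sum_mul]
    have expand : ∀ k ∈ Finset.range (m + 1),
        qS2 q m k * q ^ (k.choose 2) * qfall q ℓ k * qint q ℓ
          = qS2 q m k * (q ^ (k.choose 2) * q ^ k) * qfall q ℓ (k + 1)
            + qS2 q m k * q ^ (k.choose 2) * qint q k * qfall q ℓ k := by
      intro k _
      have h := qint_mul_qfall hq1 ℓ k
      linear_combination (qS2 q m k * q ^ (k.choose 2)) * h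
    rw [Finset.sum_congr rfl expand, Finset.sum_add_distrib]
    rw [Finset.sum_range_succ' (fun k => qS2 q (m + 1) k * q ^ (k.choose 2) * qfall q ℓ k) (m + 1)]
    rw [show qS2 q (m + 1) 0 = 0 from rfl]
    have step : ∀ k ∈ Finset.range (m + 1),
        qS2 q (m + 1) (k + 1) * q ^ ((k + 1).choose 2) * qfall q ℓ (k + 1)
          = qS2 q m k * (q ^ (k.choose 2) * q ^ k) * qfall q ℓ (k + 1)
            + qint q (k + 1) * qS2 q m (k + 1) * (q ^ (k.choose 2) * q ^ k) * qfall q ℓ (k + 1) := by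
      intro k _
      rw [show qS2 q (m + 1) (k + 1) = qS2 q m k + qint q (k + 1) * qS2 q m (k + 1) from rfl,
        choose_two_succ, pow_add]
      ring
    rw [Finset.sum_congr rfl step, Finset.sum_add_distrib]
    have hB : ∑ k ∈ Finset.range (m + 1),
        qint q (k + 1) * qS2 q m (k + 1) * (q ^ (k.choose 2) * q ^ k) * qfall q ℓ (k + 1)
          = ∑ k ∈ Finset.range (m + 1), qS2 q m k * q ^ (k.choose 2) * qint q k * qfall q ℓ k := by
      rw [Finset.sum_range_succ (fun k => qint q (k + 1) * qS2 q m (k + 1) * (q ^ (k.choose 2) * q ^ k) * qfall q ℓ (k + 1)) m]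
      rw [Finset.sum_range_succ' (fun k => qS2 q m k * q ^ (k.choose 2) * qint q k * qfall q ℓ k) m]
      rw [qS2_eq_zero m (m + 1) (by omega), qint_zero]
      simp only [mul_zero, zero_mul, add_zero]
      apply Finset.sum_congr rfl
      intro k _
      rw [choose_two_succ, pow_add]
      ring
    rw [hB]
    ring

lemma qrise_expand (hq1 : q ≠ 1) (ℓ p : ℕ) :
    qrise q ℓ p = ∑ m ∈ Finset.range (p + 1), qS1 q p m * qint q ℓ ^ m := by
  induction p with
  | zero =>
    rw [qrise, Finset.prod_range_zero, Finset.sum_range_one,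
      show qS1 q 0 0 = 1 from rfl]
    norm_num
  | succ p ih =>
    have hstep : qrise q ℓ (p + 1) = qrise q ℓ p * qint q (ℓ + p) := Finset.prod_range_succ _ _
    have hsplit : qint q (ℓ + p) = qint q p + q ^ p * qint q ℓ := by
      have := qint_add hq1 p ℓ
      rw [show p + ℓ = ℓ + p from by omega] at this
      exact this
    rw [hstep, hsplit, ih, Finset.sum_mul]
    have expand : ∀ m ∈ Finset.range (p + 1),
        qS1 q p m * qint q ℓ ^ m * (qint q p + q ^ p * qint q ℓ)
          = qint q p * qS1 q p m * qint q ℓ ^ m + q ^ p * qS1 q p m * qint q ℓ ^ (m + 1) := by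
      intro m _
      rw [pow_succ]
      ring
    rw [Finset.sum_congr rfl expand, Finset.sum_add_distrib]
    rw [Finset.sum_range_succ' (fun m => qS1 q (p + 1) m * qint q ℓ ^ m) (p + 1)]
    have step2 : ∀ m ∈ Finset.range (p + 1),
        qS1 q (p + 1) (m + 1) * qint q ℓ ^ (m + 1)
          = qint q p * qS1 q p (m + 1) * qint q ℓ ^ (m + 1)
            + q ^ p * qS1 q p m * qint q ℓ ^ (m + 1) := by
      intro m _
      rw [show qS1 q (p + 1) (m + 1) = qint q p * qS1 q p (m + 1) + q ^ p * qS1 q p m from rfl]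
      ring
    rw [Finset.sum_congr rfl step2, Finset.sum_add_distrib]
    rw [show qS1 q (p + 1) 0 = qint q p * qS1 q p 0 from rfl]
    have hA : ∑ m ∈ Finset.range (p + 1), qint q p * qS1 q p m * qint q ℓ ^ m
        = (∑ m ∈ Finset.range (p + 1), qint q p * qS1 q p (m + 1) * qint q ℓ ^ (m + 1))
          + qint q p * qS1 q p 0 * qint q ℓ ^ 0 := by
      rw [← Finset.sum_range_succ' (fun m => qint q p * qS1 q p m * qint q ℓ ^ m) (p + 1)]
      rw [Finset.sum_range_succ (fun m => qint q p * qS1 q p m * qint q ℓ ^ m) (p + 1)]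
      rw [qS1_eq_zero p (p + 1) (by omega)]
      ring
    rw [hA]
    ring

lemma perM (hq : 0 < q) (hq1 : q ≠ 1) (s n m : ℕ) :
    ∑ ℓ ∈ Finset.Icc 1 n, q ^ (ℓ - 1) * qint q ℓ ^ m * qhyp q (s + 1) ℓ
      = Aq q m (s + 1) n * qhyp q (s + 1) n - Bq q m (s + 1) n := by
  have hq0 : q ≠ 0 := hq.ne'
  have hterm : ∀ ℓ ∈ Finset.Icc 1 n, q ^ (ℓ - 1) * qint q ℓ ^ m * qhyp q (s + 1) ℓ
      = ∑ k ∈ Finset.range (m + 1),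
          qS2 q m k * q ^ (k.choose 2) * (q ^ (ℓ - 1) * qfall q ℓ k * qhyp q (s + 1) ℓ) := by
    intro ℓ _
    rw [qpow_expand hq1 ℓ m, Finset.mul_sum, Finset.sum_mul]
    apply Finset.sum_congr rfl
    intro k _
    ring
  rw [Finset.sum_congr rfl hterm, Finset.sum_comm]
  have hinner : ∀ k ∈ Finset.range (m + 1),
      ∑ ℓ ∈ Finset.Icc 1 n,
          qS2 q m k * q ^ (k.choose 2) * (q ^ (ℓ - 1) * qfall q ℓ k * qhyp q (s + 1) ℓ)
        = qS2 q m k * q ^ (k.choose 2) *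
            (aT q k s n * (qharm q (n + s) - qharm q s) - bB q k s n) := by
    intro k _
    rw [← Finset.mul_sum, coreV hq hq1 k s n]
  rw [Finset.sum_congr rfl hinner]
  rw [qhyp_closed hq hq1 s n, Aq, Bq, Finset.sum_mul, ← Finset.sum_sub_distrib]
  apply Finset.sum_congr rfl
  intro k _
  have hB0 : qbinom q (n + s) s ≠ 0 := (qbinom_pos hq hq1 (by omega)).ne'
  have hz1 : ((k.choose 2 : ℤ) + (k : ℤ) - 1) = ((k.choose 2 + k : ℕ) : ℤ) + (-1) := by
    push_cast; ring
  have hz2 : ((k.choose 2 : ℤ) + ((s + 1 : ℕ) : ℤ) + 2 * (k : ℤ) - 2)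
      = ((k.choose 2 + s + 2 * k : ℕ) : ℤ) + (-1) := by
    push_cast; ring
  rw [hz1, hz2, zpow_add₀ hq0, zpow_add₀ hq0, zpow_natCast, zpow_natCast, zpow_neg_one]
  rw [show n + (s + 1) - 1 = n + s from by omega, show (s + 1) - 1 = s from by omega,
    show (s + 1) + k - 1 = s + k from by omega]
  rw [aT, bB]
  rw [pow_add, pow_add]
  have hik : qint q (s + 1 + k) ≠ 0 := qint_ne_zero hq hq1 (by omega)
  rw [show s + 1 + n - 1 = s + n from by omega]
  field_simp
  ring

/-- For `q > 0`, `q ≠ 1` and positive integers `n, p, r`,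
`∑_{ℓ=1}^n q^{ℓ-1} [ℓ]_q^{(p)} H_ℓ^{(r)}(q)
   = (∑_{m=1}^p s_{uq}(p,m) A_q(m,r,n)) H_n^{(r)}(q) - ∑_{m=1}^p s_{uq}(p,m) B_q(m,r,n)`. -/
theorem sum_qpow_qrise_mul_qhyp (q : ℝ) (hq : 0 < q) (hq1 : q ≠ 1) (n p r : ℕ)
    (hn : 1 ≤ n) (hp : 1 ≤ p) (hr : 1 ≤ r) :
    ∑ ℓ ∈ Finset.Icc 1 n, q ^ (ℓ - 1) * qrise q ℓ p * qhyp q r ℓ =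
      (∑ m ∈ Finset.Icc 1 p, qS1 q p m * Aq q m r n) * qhyp q r n -
        ∑ m ∈ Finset.Icc 1 p, qS1 q p m * Bq q m r n := by
  obtain ⟨s, rfl⟩ : ∃ s, r = s + 1 := ⟨r - 1, by omega⟩
  have hrise : ∀ ℓ : ℕ, qrise q ℓ p = ∑ m ∈ Finset.Icc 1 p, qS1 q p m * qint q ℓ ^ m := by
    intro ℓ
    rw [qrise_expand hq1 ℓ p, Finset.range_eq_Ico,
      Finset.sum_eq_sum_Ico_succ_bot (show 0 < p + 1 by omega), qS1_apply_zero p hp,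
      Finset.Ico_add_one_right_eq_Icc, zero_mul, zero_add]
  have hL : ∀ ℓ ∈ Finset.Icc 1 n, q ^ (ℓ - 1) * qrise q ℓ p * qhyp q (s + 1) ℓ
      = ∑ m ∈ Finset.Icc 1 p, qS1 q p m * (q ^ (ℓ - 1) * qint q ℓ ^ m * qhyp q (s + 1) ℓ) := by
    intro ℓ _
    rw [hrise ℓ, Finset.mul_sum, Finset.sum_mul]
    apply Finset.sum_congr rfl
    intro m _
    ring
  rw [Finset.sum_congr rfl hL, Finset.sum_comm, Finset.sum_mul, ← Finset.sum_sub_distrib]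
  apply Finset.sum_congr rfl
  intro m _
  rw [← Finset.mul_sum, perM hq hq1 s n m]
  ring
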